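/- The matrix (s/C)U_1 + Ū (with U_c and Ū as in the symmetric probabilities setting) has eigenvalues: T = (α/(C−1))(s(1−α) + (2 − αC/(C−1))) with multiplicity 1, (α/(C−1))(s/C + (2 − αC/(C−1))) with multiplicity C−2, and 0 with multiplicity 1. -/

import Mathlib

open Matrix Polynomial

lemma rect_charpoly {n : ℕ} (hn : 2 ≤ n) (P : Matrix (Fin n) (Fin 2) ℝ)
    (Q : Matrix (Fin 2) (Fin n) ℝ) :
    (P * Q).charpoly = X ^ (n - 2) * (Q * P).charpoly := by
  classical
  set F := FractionRing ℝ[X]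
  let f : ℝ[X] →+* F := algebraMap ℝ[X] F
  have hinj : Function.Injective f := IsFractionRing.injective ℝ[X] F
  set g : ℝ →+* F := f.comp (Polynomial.C : ℝ →+* ℝ[X]) with hg
  set x : F := f X with hxdef
  have hx : x ≠ 0 := by
    rw [hxdef]
    exact (map_ne_zero_iff f hinj).mpr Polynomial.X_ne_zero
  have hdet : ∀ {m : ℕ} (M : Matrix (Fin m) (Fin m) ℝ),
      f M.charpoly = (x • (1 : Matrix (Fin m) (Fin m) F) - M.map g).det := by
    intro m M
    rw [Matrix.charpoly, RingHom.map_det]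
    congr 1
    ext i j
    by_cases h : i = j
    · subst h
      simp [Matrix.map_apply, charmatrix_apply_eq, Matrix.one_apply, hg]
      exact hxdef.symm
    · simp [Matrix.map_apply, charmatrix_apply_ne _ _ _ h, Matrix.one_apply, h, hg]
  apply hinj
  rw [_root_.map_mul, map_pow, hdet, hdet, ← hxdef]
  have hmapP : (P * Q).map g = P.map g * Q.map g := Matrix.map_mul
  have hmapQ : (Q * P).map g = Q.map g * P.map g := Matrix.map_mul
  rw [hmapP, hmapQ]
  set Pg := P.map g
  set Qg := Q.map g
  have id1 : x • ((1 : Matrix (Fin n) (Fin n) F) - (x⁻¹ • Pg) * Qg)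
      = x • (1 : Matrix (Fin n) (Fin n) F) - Pg * Qg := by
    rw [smul_sub, Matrix.smul_mul, smul_smul, mul_inv_cancel₀ hx, one_smul]
  have id2 : x⁻¹ • (x • (1 : Matrix (Fin 2) (Fin 2) F) - Qg * Pg)
      = (1 : Matrix (Fin 2) (Fin 2) F) - Qg * (x⁻¹ • Pg) := by
    rw [smul_sub, smul_smul, inv_mul_cancel₀ hx, one_smul, Matrix.mul_smul]
  calc (x • (1 : Matrix (Fin n) (Fin n) F) - Pg * Qg).det
      = (x • ((1 : Matrix (Fin n) (Fin n) F) - (x⁻¹ • Pg) * Qg)).det := by rw [id1]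
    _ = x ^ n * ((1 : Matrix (Fin n) (Fin n) F) - (x⁻¹ • Pg) * Qg).det := by
        rw [Matrix.det_smul, Fintype.card_fin]
    _ = x ^ n * ((1 : Matrix (Fin 2) (Fin 2) F) - Qg * (x⁻¹ • Pg)).det := by
        rw [Matrix.det_one_sub_mul_comm]
    _ = x ^ n * (x⁻¹ • (x • (1 : Matrix (Fin 2) (Fin 2) F) - Qg * Pg)).det := by rw [id2]
    _ = x ^ n * ((x⁻¹) ^ 2 * (x • (1 : Matrix (Fin 2) (Fin 2) F) - Qg * Pg).det) := by
        rw [Matrix.det_smul, Fintype.card_fin]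
    _ = x ^ (n - 2) * (x • (1 : Matrix (Fin 2) (Fin 2) F) - Qg * Pg).det := by
        rw [← mul_assoc]
        congr 1
        have : x ^ n = x ^ (n - 2) * x ^ 2 := by
          rw [← pow_add, Nat.sub_add_cancel hn]
        rw [this, mul_assoc, ← mul_pow, mul_inv_cancel₀ hx, one_pow, mul_one]


set_option maxHeartbeats 2000000 in
lemma stmt14_aux (c α s β γ Tv AA Bv Dv Fv : ℝ) (hc0 : c ≠ 0) (hc1 : c - 1 ≠ 0)
    (hβ : β = α / (c - 1)) (hγ : γ = 1 - α - β)
    (hTv : Tv = β * (s * (1 - α) + (2 - α * c / (c - 1))))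
    (hAA : AA = β * (s / c + (2 - α * c / (c - 1))))
    (hBv : Bv = -(s * β ^ 2 / c) - β ^ 2 - 2 * β * γ / c)
    (hDv : Dv = s / c * (γ - γ ^ 2))
    (hFv : Fv = -(s / c * (β * γ))) :
    (s / c * (β + γ * 1 - (β + γ * 1) * (β + γ * 1)) +
        c⁻¹ * (c * (β - β ^ 2) + (γ - 2 * β * γ - γ ^ 2)) =
      AA * 1 + (Bv + Fv * 1 + Fv * 1 + Dv * (1 * 1)))
    ∧ (s / c * (β + γ * 0 - (β + γ * 0) * (β + γ * 0)) +
        c⁻¹ * (c * (β - β ^ 2) + (γ - 2 * β * γ - γ ^ 2)) =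
      AA * 1 + (Bv + Fv * 0 + Fv * 0 + Dv * (0 * 0)))
    ∧ (s / c * (0 - (β + γ * 1) * (β + γ * 0)) + c⁻¹ * (-(c * β ^ 2) - 2 * β * γ) =
      AA * 0 + (Bv + Fv * 0 + Fv * 1 + Dv * (1 * 0)))
    ∧ (s / c * (0 - (β + γ * 0) * (β + γ * 1)) + c⁻¹ * (-(c * β ^ 2) - 2 * β * γ) =
      AA * 0 + (Bv + Fv * 1 + Fv * 0 + Dv * (0 * 1)))
    ∧ (s / c * (0 - (β + γ * 0) * (β + γ * 0)) + c⁻¹ * (-(c * β ^ 2) - 2 * β * γ) =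
      AA * 0 + (Bv + Fv * 0 + Fv * 0 + Dv * (0 * 0)))
    ∧ ((c * Bv + Fv) + (Fv + Dv) = (Tv - AA) + (-AA))
    ∧ ((c * Bv + Fv) * (Fv + Dv) - (c * Fv + Dv) * (Bv + Fv) = (Tv - AA) * (-AA)) := by
  subst hβ hγ hTv hAA hBv hDv hFv
  refine ⟨?_, ?_, ?_, ?_, ?_, ?_, ?_⟩ <;> field_simp <;> ring

set_option maxHeartbeats 2000000 in
/-- The matrix `(s/C) U_1 + Ū` has eigenvalues
`T = (α/(C−1))(s(1−α) + (2 − αC/(C−1)))` with multiplicity 1,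
`(α/(C−1))(s/C + (2 − αC/(C−1)))` with multiplicity `C−2`, and `0` with multiplicity 1. -/
theorem stmt14 (C : ℕ) (hC : 2 ≤ C) (α s : ℝ) (hα0 : 0 < α) (hα1 : α < 1) (hs : 0 ≤ s)
    (p : Fin C → Fin C → ℝ)
    (hp : ∀ c c', p c c' = if c' = c then 1 - α else α / (C - 1))
    (U : Fin C → Matrix (Fin C) (Fin C) ℝ)
    (hU : ∀ c, U c = Matrix.diagonal (p c) - vecMulVec (p c) (p c))
    (Ubar : Matrix (Fin C) (Fin C) ℝ)
    (hUbar : Ubar = (C : ℝ)⁻¹ • ∑ c, U c) :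
    ((s / C) • U ⟨0, by omega⟩ + Ubar).charpoly =
      (X - Polynomial.C (α / (C - 1) * (s * (1 - α) + (2 - α * C / (C - 1))))) *
        (X - Polynomial.C (α / (C - 1) * (s / C + (2 - α * C / (C - 1))))) ^ (C - 2) *
        X := by
  classical
  have hC0 : 0 < C := by omega
  have hc2 : (2 : ℝ) ≤ (C : ℝ) := by exact_mod_cast hC
  have hc0 : (C : ℝ) ≠ 0 := by linarith
  have hc1 : (C : ℝ) - 1 ≠ 0 := by
    intro h
    linarith
  set z : Fin C := ⟨0, hC0⟩ with hz
  set β : ℝ := α / ((C : ℝ) - 1) with hβ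
  set Tv : ℝ := β * (s * (1 - α) + (2 - α * (C : ℝ) / ((C : ℝ) - 1))) with hTv
  set AA : ℝ := β * (s / (C : ℝ) + (2 - α * (C : ℝ) / ((C : ℝ) - 1))) with hAA
  set γ : ℝ := 1 - α - β with hγ
  set Bv : ℝ := -(s * β ^ 2 / (C : ℝ)) - β ^ 2 - 2 * β * γ / (C : ℝ) with hBv
  set Dv : ℝ := s / (C : ℝ) * (γ - γ ^ 2) with hDv
  set Fv : ℝ := -(s / (C : ℝ) * (β * γ)) with hFv
  set W : Matrix (Fin C) (Fin 2) ℝ :=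
    Matrix.of (fun i k => if k = 0 then 1 else if i = z then 1 else 0) with hW
  set N : Matrix (Fin 2) (Fin 2) ℝ := !![Bv, Fv; Fv, Dv] with hN
  obtain ⟨k1, k2, k3, k4, k5, k6, k7⟩ :=
    stmt14_aux (C : ℝ) α s β γ Tv AA Bv Dv Fv hc0 hc1 hβ hγ hTv hAA hBv hDv hFv
  -- entries of p
  have hpc : ∀ cc i, p cc i = β + γ * (if i = cc then 1 else 0) := by
    intro cc i
    rw [hp]
    by_cases h : i = cc
    · simp [h, hγ]
    · simp [h, hβ]
  -- entries of U
  have hUe : ∀ cc i j, U cc i j =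
      (if i = j then β + γ * (if i = cc then 1 else 0) else 0) -
        (β + γ * (if i = cc then 1 else 0)) * (β + γ * (if j = cc then 1 else 0)) := by
    intro cc i j
    rw [hU cc]
    simp [Matrix.sub_apply, Matrix.diagonal_apply, Matrix.vecMulVec_apply, hpc]
  have S1 : ∀ i : Fin C, ∑ cc : Fin C, (if i = cc then (1 : ℝ) else 0) = 1 := by
    intro i; simp
  have S2 : ∀ i j : Fin C, i ≠ j →
      ∑ cc : Fin C, (if i = cc then (1 : ℝ) else 0) * (if j = cc then 1 else 0) = 0 := by
    intro i j h
    apply Finset.sum_eq_zero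
    intro cc _
    by_cases h1 : i = cc
    · by_cases h2 : j = cc
      · exact absurd (h1.trans h2.symm) h
      · simp [h1, h2]
    · simp [h1]
  have Sdiag : ∀ i : Fin C, ∑ cc : Fin C, U cc i i =
      (C : ℝ) * (β - β ^ 2) + (γ - 2 * β * γ - γ ^ 2) := by
    intro i
    have he : ∀ cc : Fin C, U cc i i =
        (β - β ^ 2) + (γ - 2 * β * γ - γ ^ 2) * (if i = cc then 1 else 0) := by
      intro cc
      rw [hUe]
      by_cases h : i = cc <;> simp [h] <;> ring
    rw [Finset.sum_congr rfl fun cc _ => he cc, Finset.sum_add_distrib,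
      Finset.sum_const, ← Finset.mul_sum, S1]
    simp [Finset.card_univ]
    try ring
  have Soff : ∀ i j : Fin C, i ≠ j → ∑ cc : Fin C, U cc i j =
      -((C : ℝ) * β ^ 2) - 2 * β * γ := by
    intro i j hij
    have he : ∀ cc : Fin C, U cc i j =
        (-β ^ 2) + (-(β * γ)) * (if i = cc then 1 else 0)
          + (-(β * γ)) * (if j = cc then 1 else 0)
          + (-γ ^ 2) * ((if i = cc then 1 else 0) * (if j = cc then 1 else 0)) := by
      intro cc
      rw [hUe]
      simp only [hij, if_false]
      ring
    rw [Finset.sum_congr rfl fun cc _ => he cc, Finset.sum_add_distrib,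
      Finset.sum_add_distrib, Finset.sum_add_distrib, Finset.sum_const,
      ← Finset.mul_sum, ← Finset.mul_sum, ← Finset.mul_sum, S1, S1, S2 i j hij]
    simp [Finset.card_univ]
    try ring
  -- entries of the rank-two part
  have hWNW : ∀ i j : Fin C, ((W * N) * Wᵀ) i j =
      Bv + Fv * (if j = z then 1 else 0) + Fv * (if i = z then 1 else 0)
        + Dv * ((if i = z then 1 else 0) * (if j = z then 1 else 0)) := by
    intro i j
    simp only [Matrix.mul_apply, Fin.sum_univ_two, Matrix.transpose_apply, hW, hN,
      Matrix.of_apply, Matrix.cons_val', Matrix.cons_val_zero, Matrix.cons_val_one,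
      Matrix.head_cons, Matrix.empty_val', Matrix.cons_val_fin_one, Matrix.head_fin_const]
    by_cases hi : i = z <;> by_cases hj : j = z <;> simp [hi, hj] <;> ring
  -- the key decomposition
  have M_eq : (s / (C : ℝ)) • U z + Ubar
      = AA • (1 : Matrix (Fin C) (Fin C) ℝ) + (W * N) * Wᵀ := by
    ext i j
    rw [Matrix.add_apply, Matrix.add_apply, Matrix.smul_apply, Matrix.smul_apply,
      Matrix.one_apply, hWNW, hUbar, Matrix.smul_apply, Matrix.sum_apply, hUe z i j]
    by_cases hij : i = j
    · subst hij
      rw [Sdiag i]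
      simp only [eq_self_iff_true, if_true, smul_eq_mul]
      by_cases hi : i = z
      · simp only [hi, if_true]
        exact k1
      · simp only [hi, if_false]
        exact k2
    · rw [Soff i j hij]
      simp only [hij, if_false, smul_eq_mul]
      by_cases hi : i = z
      · have hj : ¬ j = z := fun h => hij (hi.trans h.symm)
        simp only [hi, hj, if_true, if_false]
        exact k3
      · by_cases hj : j = z
        · simp only [hi, hj, if_true, if_false]
          exact k4
        · simp only [hi, hj, if_false]
          exact k5
  -- entries of the small matrix G = Wᵀ * (W * N)
  have hGa : ∀ b : Fin 2, (Wᵀ * (W * N)) 0 b = (C : ℝ) * N 0 b + N 1 b := by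
    intro b
    have : ∀ i : Fin C, Wᵀ 0 i * (W * N) i b
        = N 0 b + (if i = z then 1 else 0) * N 1 b := by
      intro i
      simp only [Matrix.transpose_apply, Matrix.mul_apply, Fin.sum_univ_two, hW,
        Matrix.of_apply]
      by_cases h : i = z <;> simp [h]
    rw [Matrix.mul_apply, Finset.sum_congr rfl fun i _ => this i,
      Finset.sum_add_distrib, Finset.sum_const, ← Finset.sum_mul]
    have : ∑ i : Fin C, (if i = z then (1:ℝ) else 0) = 1 := by simp
    rw [this]
    simp [Finset.card_univ]
  have hGb : ∀ b : Fin 2, (Wᵀ * (W * N)) 1 b = N 0 b + N 1 b := by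
    intro b
    have : ∀ i : Fin C, Wᵀ 1 i * (W * N) i b
        = if i = z then N 0 b + N 1 b else 0 := by
      intro i
      simp only [Matrix.transpose_apply, Matrix.mul_apply, Fin.sum_univ_two, hW,
        Matrix.of_apply]
      by_cases h : i = z <;> simp [h]
    rw [Matrix.mul_apply, Finset.sum_congr rfl fun i _ => this i]
    simp
  have hG00 : (Wᵀ * (W * N)) 0 0 = (C : ℝ) * Bv + Fv := by
    rw [hGa]; simp [hN]
  have hG01 : (Wᵀ * (W * N)) 0 1 = (C : ℝ) * Fv + Dv := by
    rw [hGa]; simp [hN]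
  have hG10 : (Wᵀ * (W * N)) 1 0 = Bv + Fv := by
    rw [hGb]; simp [hN]
  have hG11 : (Wᵀ * (W * N)) 1 1 = Fv + Dv := by
    rw [hGb]; simp [hN]
  -- charpoly of the 2×2 matrix
  have key : (Wᵀ * (W * N)).charpoly
      = (X - Polynomial.C (Tv - AA)) * (X - Polynomial.C (-AA)) := by
    rw [Matrix.charpoly, Matrix.det_fin_two, charmatrix_apply_eq, charmatrix_apply_eq,
      charmatrix_apply_ne _ _ _ (by decide : (0 : Fin 2) ≠ 1),
      charmatrix_apply_ne _ _ _ (by decide : (1 : Fin 2) ≠ 0),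
      hG00, hG01, hG10, hG11]
    have e1 : Polynomial.C ((C : ℝ) * Bv + Fv) + Polynomial.C (Fv + Dv)
        = Polynomial.C (Tv - AA) + Polynomial.C (-AA) := by
      rw [← _root_.map_add, ← _root_.map_add, k6]
    have e2 : Polynomial.C ((C : ℝ) * Bv + Fv) * Polynomial.C (Fv + Dv)
          - Polynomial.C ((C : ℝ) * Fv + Dv) * Polynomial.C (Bv + Fv)
        = Polynomial.C (Tv - AA) * Polynomial.C (-AA) := by
      rw [← _root_.map_mul, ← _root_.map_mul, ← _root_.map_mul, ← _root_.map_sub, k7]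
    linear_combination (-(X : ℝ[X])) * e1 + e2
  -- the shift homomorphism
  set φ : ℝ[X] →+* ℝ[X] :=
    (Polynomial.aeval (X - Polynomial.C AA) : ℝ[X] →ₐ[ℝ] ℝ[X]).toRingHom with hφ
  have φX : φ X = X - Polynomial.C AA := by simp [hφ]
  have φC : ∀ r : ℝ, φ (Polynomial.C r) = Polynomial.C r := by
    intro r
    simp [hφ, Polynomial.aeval_C, Polynomial.algebraMap_eq]
  have hshift : φ (((W * N) * Wᵀ).charpoly) = ((s / (C : ℝ)) • U z + Ubar).charpoly := by
    rw [Matrix.charpoly, RingHom.map_det, Matrix.charpoly]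
    congr 1
    ext i j : 2
    simp only [RingHom.mapMatrix_apply, Matrix.map_apply]
    by_cases h : i = j
    · subst h
      rw [charmatrix_apply_eq, charmatrix_apply_eq]
      have hM : ((s / (C : ℝ)) • U z + Ubar) i i = AA + ((W * N) * Wᵀ) i i := by
        rw [M_eq, Matrix.add_apply, Matrix.smul_apply, Matrix.one_apply_eq, smul_eq_mul,
          mul_one]
      rw [hM, _root_.map_sub, φX, φC (((W * N) * Wᵀ) i i), _root_.map_add]
      ring
    · rw [charmatrix_apply_ne _ _ _ h, charmatrix_apply_ne _ _ _ h]
      have hM : ((s / (C : ℝ)) • U z + Ubar) i j = ((W * N) * Wᵀ) i j := by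
        rw [M_eq, Matrix.add_apply, Matrix.smul_apply, Matrix.one_apply_ne h, smul_eq_mul,
          mul_zero, zero_add]
      rw [hM, _root_.map_neg, φC]
  -- assemble
  have hq : φ ((X - Polynomial.C (Tv - AA)) * (X - Polynomial.C (-AA)))
      = (X - Polynomial.C Tv) * X := by
    rw [_root_.map_mul, map_sub φ X (Polynomial.C (Tv - AA)), map_sub φ X (Polynomial.C (-AA)),
      φX, φC (Tv - AA), φC (-AA), sub_sub, sub_sub,
      ← map_add Polynomial.C AA (Tv - AA), ← map_add Polynomial.C AA (-AA),
      show AA + (Tv - AA) = Tv from by ring, show AA + -AA = (0 : ℝ) from by ring,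
      _root_.map_zero, sub_zero]
  rw [← hshift, rect_charpoly hC (W * N) Wᵀ, key, _root_.map_mul, _root_.map_pow, φX, hq]
  ring
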